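/- Let p be a prime and let U_{n+1}(F_p) denote the group of upper-triangular unipotent (n+1)×(n+1) matrices over F_p. Then the n-th term of the Zassenhaus p-filtration of U_{n+1}(F_p) equals the center Z(U_{n+1}(F_p)), which is isomorphic to F_p; moreover n = max{ h : U_{n+1}(F_p)_{(h)} ≠ 1 }. -/

import Mathlib

open Matrix
open scoped commutatorElement

private lemma diag_mul_of_triangular {n : ℕ} {R : Type} [CommRing R]
    (M N : Matrix (Fin n) (Fin n) R)
    (hM : ∀ i j : Fin n, j < i → M i j = 0)
    (hN : ∀ i j : Fin n, j < i → N i j = 0) (i : Fin n) :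
    (M * N) i i = M i i * N i i := by
  rw [Matrix.mul_apply]
  refine Finset.sum_eq_single i (fun k _ hk => ?_) (by simp)
  rcases lt_or_gt_of_ne hk with h | h
  · rw [hM i k h, zero_mul]
  · rw [hN k i h, mul_zero]

/-- The group `U_n(F_p)` of upper-triangular unipotent `n × n` matrices over `F_p`,
as a subgroup of the units of the matrix ring. -/
def unipotentUpperTriangular (p n : ℕ) [Fact p.Prime] :
    Subgroup (Matrix (Fin n) (Fin n) (ZMod p))ˣ where
  carrier := {M | (∀ i j : Fin n, j < i → (M : Matrix (Fin n) (Fin n) (ZMod p)) i j = 0) ∧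
      ∀ i : Fin n, (M : Matrix (Fin n) (Fin n) (ZMod p)) i i = 1}
  one_mem' := by
    constructor
    · intro i j h
      simp [Matrix.one_apply, (ne_of_lt h).symm]
    · intro i; simp
  mul_mem' := by
    rintro a b ⟨haT, haD⟩ ⟨hbT, hbD⟩
    constructor
    · intro i j h
      rw [Units.val_mul, Matrix.mul_apply]
      refine Finset.sum_eq_zero fun k _ => ?_
      rcases le_or_gt k j with hk | hk
      · rw [haT i k (lt_of_le_of_lt hk h), zero_mul]
      · rw [hbT k j hk, mul_zero]
    · intro i
      rw [Units.val_mul, diag_mul_of_triangular _ _ haT hbT i, haD i, hbD i, one_mul]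
  inv_mem' := by
    rintro a ⟨haT, haD⟩
    have hA : ((a⁻¹ : (Matrix (Fin n) (Fin n) (ZMod p))ˣ) : Matrix (Fin n) (Fin n) (ZMod p)) =
        (a : Matrix (Fin n) (Fin n) (ZMod p))⁻¹ := by
      rw [Matrix.coe_units_inv]
    have hdet : IsUnit (a : Matrix (Fin n) (Fin n) (ZMod p)).det :=
      (Matrix.isUnit_iff_isUnit_det _).1 a.isUnit
    haveI : Invertible (a : Matrix (Fin n) (Fin n) (ZMod p)) :=
      Matrix.invertibleOfIsUnitDet _ hdet
    have htri : BlockTriangular ((a : Matrix (Fin n) (Fin n) (ZMod p))⁻¹) id :=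
      Matrix.blockTriangular_inv_of_blockTriangular (fun i j h => haT i j h)
    have hTri' : ∀ i j : Fin n, j < i →
        ((a : Matrix (Fin n) (Fin n) (ZMod p))⁻¹) i j = 0 := fun i j h => htri h
    constructor
    · intro i j h
      rw [hA]; exact hTri' i j h
    · intro i
      have h1 : ((a : Matrix (Fin n) (Fin n) (ZMod p))⁻¹ *
          (a : Matrix (Fin n) (Fin n) (ZMod p))) i i = 1 := by
        rw [Matrix.nonsing_inv_mul _ hdet]; simp
      rw [diag_mul_of_triangular _ _ hTri' haT i, haD i, mul_one] at h1
      rw [hA]; exact h1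


section ZassAux

variable {p : ℕ} [Fact p.Prime] {N : ℕ}

/-- strictly-upper support at distance ≥ c -/
private def Supp (c : ℕ) (A : Matrix (Fin N) (Fin N) (ZMod p)) : Prop :=
  ∀ i j : Fin N, (j : ℕ) < (i : ℕ) + c → A i j = 0

private lemma supp_mono {c c' : ℕ} (h : c' ≤ c) {A : Matrix (Fin N) (Fin N) (ZMod p)}
    (hA : Supp c A) : Supp c' A :=
  fun i j hij => hA i j (by omega)

private lemma supp_zero (c : ℕ) : Supp (p := p) (N := N) c 0 := fun _ _ _ => rfl

private lemma supp_add {c : ℕ} {A B : Matrix (Fin N) (Fin N) (ZMod p)}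
    (hA : Supp c A) (hB : Supp c B) : Supp c (A + B) := by
  intro i j h
  simp [Matrix.add_apply, hA i j h, hB i j h]

private lemma supp_neg {c : ℕ} {A : Matrix (Fin N) (Fin N) (ZMod p)}
    (hA : Supp c A) : Supp c (-A) := by
  intro i j h
  simp [Matrix.neg_apply, hA i j h]

private lemma supp_sub {c : ℕ} {A B : Matrix (Fin N) (Fin N) (ZMod p)}
    (hA : Supp c A) (hB : Supp c B) : Supp c (A - B) := by
  intro i j h
  simp [Matrix.sub_apply, hA i j h, hB i j h]

private lemma supp_mul {a b : ℕ} {A B : Matrix (Fin N) (Fin N) (ZMod p)}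
    (hA : Supp a A) (hB : Supp b B) : Supp (a + b) (A * B) := by
  intro i j h
  rw [Matrix.mul_apply]
  refine Finset.sum_eq_zero fun k _ => ?_
  by_cases hk : (k : ℕ) < (i : ℕ) + a
  · rw [hA i k hk, zero_mul]
  · rw [hB k j (by omega), mul_zero]

private lemma supp_mul_ut {a : ℕ} {A M : Matrix (Fin N) (Fin N) (ZMod p)}
    (hA : Supp a A) (hM : ∀ i j : Fin N, j < i → M i j = 0) : Supp a (A * M) := by
  intro i j h
  rw [Matrix.mul_apply]
  refine Finset.sum_eq_zero fun k _ => ?_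
  by_cases hk : (k : ℕ) < (i : ℕ) + a
  · rw [hA i k hk, zero_mul]
  · rw [hM k j (by rw [Fin.lt_def]; omega), mul_zero]

private lemma supp_ut_mul {a : ℕ} {A M : Matrix (Fin N) (Fin N) (ZMod p)}
    (hM : ∀ i j : Fin N, j < i → M i j = 0) (hA : Supp a A) : Supp a (M * A) := by
  intro i j h
  rw [Matrix.mul_apply]
  refine Finset.sum_eq_zero fun k _ => ?_
  by_cases hk : (k : ℕ) < (i : ℕ)
  · rw [hM i k (by rwa [Fin.lt_def]), zero_mul]
  · rw [hA k j (by omega), mul_zero]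

private lemma supp_pow {a : ℕ} {A : Matrix (Fin N) (Fin N) (ZMod p)}
    (hA : Supp a A) : ∀ s : ℕ, 1 ≤ s → Supp (s * a) (A ^ s) := by
  intro s
  induction s with
  | zero => omega
  | succ s ih =>
    intro _
    rcases Nat.eq_zero_or_pos s with rfl | hs
    · simpa [pow_one] using hA
    · rw [pow_succ]
      have := supp_mul (ih hs) hA
      rwa [show s * a + a = (s + 1) * a by ring] at this

/-- the matrix underlying an element of the unipotent group -/
private def mat (g : unipotentUpperTriangular p N) : Matrix (Fin N) (Fin N) (ZMod p) :=
  ((g : (Matrix (Fin N) (Fin N) (ZMod p))ˣ) : Matrix (Fin N) (Fin N) (ZMod p))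

private lemma mat_one : mat (1 : unipotentUpperTriangular p N) = 1 := rfl

private lemma mat_mul (a b : unipotentUpperTriangular p N) : mat (a * b) = mat a * mat b := rfl

private lemma mat_pow (a : unipotentUpperTriangular p N) (s : ℕ) : mat (a ^ s) = mat a ^ s := by
  induction s with
  | zero => simp [pow_zero, mat_one]
  | succ s ih => rw [pow_succ, pow_succ, mat_mul, ih]

private lemma mat_tri (g : unipotentUpperTriangular p N) :
    ∀ i j : Fin N, j < i → mat g i j = 0 := g.2.1

private lemma mat_diag (g : unipotentUpperTriangular p N) :
    ∀ i : Fin N, mat g i i = 1 := g.2.2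

private lemma mat_inv_mul (a : unipotentUpperTriangular p N) : mat a⁻¹ * mat a = 1 := by
  rw [← mat_mul, inv_mul_cancel, mat_one]

private lemma mat_mul_inv (a : unipotentUpperTriangular p N) : mat a * mat a⁻¹ = 1 := by
  rw [← mat_mul, mul_inv_cancel, mat_one]

private lemma UT_ext {a b : unipotentUpperTriangular p N} (h : mat a = mat b) : a = b :=
  Subtype.ext (Units.ext h)

/-- the congruence filtration -/
private def filt (p : ℕ) [Fact p.Prime] (N m : ℕ) : Subgroup (unipotentUpperTriangular p N) where
  carrier := {g | Supp m (mat g - 1)}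
  one_mem' := by
    show Supp m (mat 1 - 1)
    rw [mat_one, sub_self]
    exact supp_zero m
  mul_mem' := by
    intro a b ha hb
    show Supp m (mat (a * b) - 1)
    have key : mat (a * b) - 1 = (mat a - 1) * mat b + (mat b - 1) := by
      rw [mat_mul]; noncomm_ring
    rw [key]
    exact supp_add (supp_mul_ut ha (mat_tri b)) hb
  inv_mem' := by
    intro a ha
    show Supp m (mat a⁻¹ - 1)
    have key : mat a⁻¹ - 1 = -(mat a⁻¹ * (mat a - 1)) := by
      rw [mul_sub, mat_inv_mul, mul_one, neg_sub]
    rw [key]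
    exact supp_neg (supp_ut_mul (mat_tri a⁻¹) ha)

private lemma mem_filt {m : ℕ} {g : unipotentUpperTriangular p N} :
    g ∈ filt p N m ↔ Supp m (mat g - 1) := Iff.rfl

private lemma filt_mono {m m' : ℕ} (h : m ≤ m') : filt p N m' ≤ filt p N m :=
  fun _ hg => supp_mono h hg

private lemma mem_filt_one (g : unipotentUpperTriangular p N) : g ∈ filt p N 1 := by
  rw [mem_filt]
  intro i j hij
  rw [Matrix.sub_apply]
  rcases eq_or_ne i j with rfl | hne
  · rw [mat_diag, Matrix.one_apply_eq, sub_self]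
  · have hji : j < i := by rw [Fin.lt_def]; omega
    rw [mat_tri g i j hji, Matrix.one_apply_ne hne, sub_zero]

private lemma filt_eq_bot {m : ℕ} (h : N ≤ m) : filt p N m = ⊥ := by
  apply le_antisymm
  · intro g hg
    rw [mem_filt] at hg
    rw [Subgroup.mem_bot]
    apply UT_ext
    rw [mat_one]
    have : mat g - 1 = 0 := by
      ext i j
      exact hg i j (by have := j.isLt; omega)
    have h2 := sub_eq_zero.mp this
    exact h2
  · exact bot_le

private lemma filt_pow_mem {k : ℕ} [Nonempty (Fin N)] {g : unipotentUpperTriangular p N}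
    (hg : g ∈ filt p N k) : g ^ p ∈ filt p N (p * k) := by
  rw [mem_filt] at hg ⊢
  have hp1 : 1 ≤ p := (Fact.out : p.Prime).one_lt.le
  have key : mat (g ^ p) = 1 + (mat g - 1) ^ p := by
    rw [mat_pow]
    have h1 : mat g = 1 + (mat g - 1) := by abel
    conv_lhs => rw [h1]
    rw [add_pow_char_of_commute p (Commute.one_left _), one_pow]
  rw [key, add_sub_cancel_left]
  exact supp_pow hg p hp1
private lemma one_add_std_mul {i j : Fin N} (hij : j ≠ i) (x y : ZMod p) :
    (1 + single i j x) * (1 + single i j y)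
      = 1 + single i j (x + y) := by
  have h0 : single i j x * single i j y = 0 :=
    Matrix.single_mul_single_of_ne x i j i hij y
  rw [mul_add, mul_one, add_mul, one_mul, h0, add_zero, Matrix.single_add, add_assoc]

/-- elementary unipotent matrix -/
private def elem (i j : Fin N) (hij : i < j) (a : ZMod p) : unipotentUpperTriangular p N :=
  ⟨⟨1 + single i j a, 1 + single i j (-a),
    by rw [one_add_std_mul hij.ne' a (-a), add_neg_cancel, Matrix.single_zero, add_zero],
    by rw [one_add_std_mul hij.ne' (-a) a, neg_add_cancel, Matrix.single_zero, add_zero]⟩,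
    by
      constructor
      · intro i' j' h
        show (1 + single i j a) i' j' = 0
        rw [Matrix.add_apply, Matrix.one_apply_ne h.ne',
          Matrix.single_apply_of_ne _ _ _ _ _
            (by rintro ⟨rfl, rfl⟩; exact absurd hij (not_lt.mpr h.le)), add_zero]
      · intro i'
        show (1 + single i j a) i' i' = 1
        rw [Matrix.add_apply, Matrix.one_apply_eq,
          Matrix.single_apply_of_ne _ _ _ _ _
            (by rintro ⟨rfl, rfl⟩; exact absurd hij (lt_irrefl _)), add_zero]⟩

private lemma mat_elem (i j : Fin N) (hij : i < j) (a : ZMod p) :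
    mat (elem i j hij a) = 1 + single i j a := rfl

private lemma elem_commutator {i j k : Fin N} (hij : i < j) (hjk : j < k) (a b : ZMod p) :
    ⁅elem i j hij a, elem j k hjk b⁆ = elem i k (hij.trans hjk) (a * b) := by
  have hik : i < k := hij.trans hjk
  have key : elem i j hij a * elem j k hjk b
      = elem i k hik (a * b) * (elem j k hjk b * elem i j hij a) := by
    apply UT_ext
    rw [mat_mul, mat_mul, mat_mul, mat_elem, mat_elem, mat_elem]
    have hPQ : single i j a * single j k b = single i k (a * b) :=
      Matrix.single_mul_single_same a i j k b
    have hQP : single j k b * single i j a = 0 :=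
      Matrix.single_mul_single_of_ne b j k i hik.ne' a
    have hCQ : single i k (a * b) * single j k b = 0 :=
      Matrix.single_mul_single_of_ne (a * b) i k j hjk.ne' b
    have hCP : single i k (a * b) * single i j a = 0 :=
      Matrix.single_mul_single_of_ne (a * b) i k i hik.ne' a
    simp only [mul_add, add_mul, mul_one, one_mul, hPQ, hQP, hCQ, hCP, add_zero]
    abel
  rw [commutatorElement_def, key]
  group

private lemma elem_mem_Z {n : ℕ} (Z : ℕ → Subgroup (unipotentUpperTriangular p (n + 1)))
    (hZ1 : Z 1 = ⊤)
    (hZrec : ∀ m : ℕ, 2 ≤ m → Z m = Subgroup.closure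
      ({g | ∃ y ∈ Z ((m + p - 1) / p), g = y ^ p} ∪
        {g | ∃ i j : ℕ, 1 ≤ i ∧ 1 ≤ j ∧ i + j = m ∧
          ∃ a ∈ Z i, ∃ b ∈ Z j, g = ⁅a, b⁆})) :
    ∀ m : ℕ, ∀ hm : 1 ≤ m, ∀ hmn : m ≤ n, ∀ a : ZMod p,
      elem (0 : Fin (n + 1)) ⟨m, by omega⟩ (by rw [Fin.lt_def]; simp; omega) a ∈ Z m := by
  intro m hm
  induction m, hm using Nat.le_induction with
  | base => intro hmn a; rw [hZ1]; trivial
  | succ m hm ih =>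
    intro hmn a
    have hmn' : m ≤ n := by omega
    have h0m : (0 : Fin (n + 1)) < ⟨m, by omega⟩ := by rw [Fin.lt_def]; simp; omega
    have hmm1 : (⟨m, by omega⟩ : Fin (n + 1)) < ⟨m + 1, by omega⟩ := by
      rw [Fin.lt_def]; simp
    have hcomm := elem_commutator h0m hmm1 a (1 : ZMod p)
    rw [hZrec (m + 1) (by omega)]
    apply Subgroup.subset_closure
    apply Set.mem_union_right
    refine ⟨m, 1, hm, le_rfl, rfl, elem 0 ⟨m, by omega⟩ h0m a, ih hmn' a,
      elem ⟨m, by omega⟩ ⟨m + 1, by omega⟩ hmm1 1, by rw [hZ1]; trivial, ?_⟩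
    rw [hcomm, mul_one]

private lemma Z_le_filt {n : ℕ} (Z : ℕ → Subgroup (unipotentUpperTriangular p (n + 1)))
    (hZ1 : Z 1 = ⊤)
    (hZrec : ∀ m : ℕ, 2 ≤ m → Z m = Subgroup.closure
      ({g | ∃ y ∈ Z ((m + p - 1) / p), g = y ^ p} ∪
        {g | ∃ i j : ℕ, 1 ≤ i ∧ 1 ≤ j ∧ i + j = m ∧
          ∃ a ∈ Z i, ∃ b ∈ Z j, g = ⁅a, b⁆})) :
    ∀ m : ℕ, 1 ≤ m → Z m ≤ filt p (n + 1) m := by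
  intro m
  induction m using Nat.strong_induction_on with
  | _ m ih =>
    intro hm
    rcases eq_or_lt_of_le hm with h1 | h2
    · rw [← h1, hZ1]
      intro g _
      exact mem_filt_one g
    · rw [hZrec m h2, Subgroup.closure_le]
      rintro g (⟨y, hy, rfl⟩ | ⟨i, j, hi, hj, hij, a, ha, b, hb, rfl⟩)
      · -- p-th power generators
        have hp2 : 2 ≤ p := (Fact.out : p.Prime).two_le
        set kq := (m + p - 1) / p with hk
        have hk1 : 1 ≤ kq := by
          rw [hk, Nat.le_div_iff_mul_le (by omega : 0 < p)]; omega
        have hkm : kq < m := by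
          rw [hk, Nat.div_lt_iff_lt_mul (by omega : 0 < p)]
          have hA : 2 * p ≤ m * p := Nat.mul_le_mul_right p h2
          have hB : m * 2 ≤ m * p := Nat.mul_le_mul_left m hp2
          generalize m * p = X at hA hB ⊢
          omega
        have hmpk : m ≤ p * kq := by
          have hdm := Nat.div_add_mod (m + p - 1) p
          have hmod : (m + p - 1) % p < p := Nat.mod_lt _ (by omega)
          rw [← hk] at hdm
          generalize p * kq = X at hdm ⊢
          omega
        have hy' : y ∈ filt p (n + 1) kq := ih kq hkm hk1 hy
        exact SetLike.mem_coe.mpr (filt_mono hmpk (filt_pow_mem hy'))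
      · -- commutator generators
        have ha' : Supp i (mat a - 1) := ih i (by omega) hi ha
        have hb' : Supp j (mat b - 1) := ih j (by omega) hj hb
        show ⁅a, b⁆ ∈ filt p (n + 1) m
        rw [mem_filt]
        have h1 : mat a * mat a⁻¹ = 1 := mat_mul_inv a
        have h3 : (mat b * mat a) * (mat a⁻¹ * mat b⁻¹) = 1 := by
          rw [mul_assoc, ← mul_assoc (mat a), h1, one_mul, mat_mul_inv b]
        have key : mat ⁅a, b⁆ - 1
            = ((mat a - 1) * (mat b - 1) - (mat b - 1) * (mat a - 1))
              * (mat a⁻¹ * mat b⁻¹) := by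
          have hexp : (mat a - 1) * (mat b - 1) - (mat b - 1) * (mat a - 1)
              = mat a * mat b - mat b * mat a := by noncomm_ring
          rw [hexp, commutatorElement_def, mat_mul, mat_mul, mat_mul, sub_mul, h3, ← mul_assoc]
        rw [key]
        have htri : ∀ i' j' : Fin (n + 1), j' < i' → (mat a⁻¹ * mat b⁻¹) i' j' = 0 := by
          intro i' j' h
          have := mat_tri (a⁻¹ * b⁻¹) i' j' h
          rwa [mat_mul] at this
        refine supp_mul_ut ?_ htri
        have h5 := supp_mul hb' ha'
        rw [Nat.add_comm j i] at h5
        rw [← hij]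
        exact supp_sub (supp_mul ha' hb') h5
private lemma supp_form {n : ℕ} (hn : 1 ≤ n) {A : Matrix (Fin (n + 1)) (Fin (n + 1)) (ZMod p)}
    (hA : Supp n A) :
    A = single (0 : Fin (n + 1)) (Fin.last n) (A 0 (Fin.last n)) := by
  ext i j
  by_cases h : (i : ℕ) = 0 ∧ (j : ℕ) = n
  · have hi : i = 0 := Fin.ext (by simp [h.1])
    have hj : j = Fin.last n := Fin.ext (by simp [h.2])
    rw [hi, hj, Matrix.single_apply_same]
  · have hlt : (j : ℕ) < (i : ℕ) + n := by have := j.isLt; omega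
    rw [hA i j hlt, Matrix.single_apply_of_ne _ _ _ _ _ ?_]
    rintro ⟨h1, h2⟩
    exact h ⟨by rw [← h1]; rfl, by rw [← h2]; simp⟩

private lemma supp_std {n : ℕ} (c : ZMod p) :
    Supp n (single (0 : Fin (n + 1)) (Fin.last n) c) := by
  intro i j hlt
  rw [Matrix.single_apply_of_ne _ _ _ _ _ ?_]
  rintro ⟨h1, h2⟩
  rw [← h1] at hlt
  rw [← h2] at hlt
  simp at hlt

private lemma mul_std_eq {n : ℕ} (hn : 1 ≤ n) (x : unipotentUpperTriangular p (n + 1))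
    (c : ZMod p) :
    mat x * single (0 : Fin (n + 1)) (Fin.last n) c
      = single (0 : Fin (n + 1)) (Fin.last n) c := by
  ext i' j'
  rcases eq_or_ne j' (Fin.last n) with rfl | hne
  · rw [Matrix.mul_single_apply_same]
    rcases eq_or_ne i' 0 with rfl | hi
    · rw [mat_diag x 0, one_mul, Matrix.single_apply_same]
    · rw [mat_tri x i' 0 (Fin.pos_of_ne_zero hi), zero_mul,
        Matrix.single_apply_of_ne _ _ _ _ _ (by rintro ⟨rfl, -⟩; exact hi rfl)]
  · rw [Matrix.mul_single_apply_of_ne _ _ _ _ _ hne,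
      Matrix.single_apply_of_ne _ _ _ _ _ (by rintro ⟨-, rfl⟩; exact hne rfl)]

private lemma std_mul_eq {n : ℕ} (hn : 1 ≤ n) (x : unipotentUpperTriangular p (n + 1))
    (c : ZMod p) :
    single (0 : Fin (n + 1)) (Fin.last n) c * mat x
      = single (0 : Fin (n + 1)) (Fin.last n) c := by
  ext i' j'
  rcases eq_or_ne i' 0 with rfl | hne
  · rw [Matrix.single_mul_apply_same]
    rcases eq_or_ne j' (Fin.last n) with rfl | hj
    · rw [mat_diag x, mul_one, Matrix.single_apply_same]
    · have hjlt : j' < Fin.last n := by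
        rw [Fin.lt_def]; have h1 := j'.isLt
        have h2 : (j' : ℕ) ≠ n := fun hc => hj (Fin.ext (by simp [hc]))
        simp; omega
      rw [mat_tri x _ _ hjlt, mul_zero,
        Matrix.single_apply_of_ne _ _ _ _ _ (by rintro ⟨-, rfl⟩; exact hj rfl)]
  · rw [Matrix.single_mul_apply_of_ne _ _ _ _ _ (by exact fun h => hne h),
      Matrix.single_apply_of_ne _ _ _ _ _ (by rintro ⟨rfl, -⟩; exact hne rfl)]

private lemma filt_form {n : ℕ} (hn : 1 ≤ n) {g : unipotentUpperTriangular p (n + 1)}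
    (hg : Supp n (mat g - 1)) :
    ∃ c : ZMod p, mat g = 1 + single (0 : Fin (n + 1)) (Fin.last n) c := by
  refine ⟨(mat g - 1) 0 (Fin.last n), ?_⟩
  rw [← supp_form hn hg]
  abel

private lemma filt_le_center {n : ℕ} (hn : 1 ≤ n) :
    filt p (n + 1) n ≤ Subgroup.center (unipotentUpperTriangular p (n + 1)) := by
  intro g hg
  rw [Subgroup.mem_center_iff]
  intro x
  apply UT_ext
  obtain ⟨c, hc⟩ := filt_form hn hg
  rw [mat_mul, mat_mul, hc, mul_add, mul_one, add_mul, one_mul,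
    mul_std_eq hn x c, std_mul_eq hn x c]

private lemma central_supp {n : ℕ} (hn : 1 ≤ n) {g : unipotentUpperTriangular p (n + 1)}
    (hg : g ∈ Subgroup.center (unipotentUpperTriangular p (n + 1))) :
    Supp n (mat g - 1) := by
  rw [Subgroup.mem_center_iff] at hg
  intro i j hij
  rw [Matrix.sub_apply]
  by_cases hji : j < i
  · rw [mat_tri g i j hji, Matrix.one_apply_ne hji.ne', sub_zero]
  by_cases heq : i = j
  · subst heq; rw [mat_diag, Matrix.one_apply_eq, sub_self]
  have hlt : (i : ℕ) < (j : ℕ) := by rw [Fin.lt_def] at hji; omega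
  rw [Matrix.one_apply_ne heq, sub_zero]
  rcases Nat.eq_zero_or_pos (i : ℕ) with hi0 | hi1
  · -- i = 0, use column relation with e_{j, j+1}
    have hjn : (j : ℕ) < n := by omega
    have hjj1 : j < (⟨(j : ℕ) + 1, by omega⟩ : Fin (n + 1)) := by
      rw [Fin.lt_def]; simp
    set e := elem (p := p) j ⟨(j : ℕ) + 1, by omega⟩ hjj1 1 with he
    have hc : mat e * mat g = mat g * mat e := by
      rw [← mat_mul, ← mat_mul, hg e]
    rw [mat_elem, add_mul, one_mul, mul_add, mul_one] at hc
    have hS := add_left_cancel hc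
    have hent := congrFun (congrFun hS i) ⟨(j : ℕ) + 1, by omega⟩
    rw [Matrix.single_mul_apply_of_ne _ _ _ _ _
        (fun hcon => by rw [hcon] at hi0; omega),
      Matrix.mul_single_apply_same, mul_one] at hent
    exact hent.symm
  · -- i ≥ 1, use row relation with e_{i-1, i}
    have hin : (i : ℕ) - 1 + 1 ≤ n := by have := i.isLt; omega
    have hlt2 : (⟨(i : ℕ) - 1, by omega⟩ : Fin (n + 1)) < ⟨(i : ℕ) - 1 + 1, by omega⟩ := by
      rw [Fin.lt_def]; simp
    set e := elem (p := p) ⟨(i : ℕ) - 1, by omega⟩ ⟨(i : ℕ) - 1 + 1, by omega⟩ hlt2 1 with he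
    have hc : mat e * mat g = mat g * mat e := by
      rw [← mat_mul, ← mat_mul, hg e]
    rw [mat_elem, add_mul, one_mul, mul_add, mul_one] at hc
    have hS := add_left_cancel hc
    have hent := congrFun (congrFun hS ⟨(i : ℕ) - 1, by omega⟩) j
    have hieq : (⟨(i : ℕ) - 1 + 1, by omega⟩ : Fin (n + 1)) = i := Fin.ext (by simp; omega)
    rw [Matrix.single_mul_apply_same, one_mul, hieq,
      Matrix.mul_single_apply_of_ne _ _ _ _ _
        (fun hcon => by rw [hcon] at hlt; exact lt_irrefl _ hlt)] at hent
    exact hent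

private lemma one_add_std_apply {n : ℕ} (hn : 1 ≤ n) (c : ZMod p) :
    (1 + single (0 : Fin (n + 1)) (Fin.last n) c) 0 (Fin.last n) = c := by
  rw [Matrix.add_apply, Matrix.single_apply_same,
    Matrix.one_apply_ne (by exact Fin.ne_of_val_ne (by simp; omega)), zero_add]

private lemma elem_mem_filt {n : ℕ} (hn : 1 ≤ n) (h0L : (0 : Fin (n + 1)) < Fin.last n)
    (c : ZMod p) : elem 0 (Fin.last n) h0L c ∈ filt p (n + 1) n := by
  rw [mem_filt, mat_elem, add_sub_cancel_left]
  exact supp_std c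

end ZassAux

/-- Let `p` be a prime and `U_{n+1}(F_p)` the group of upper-triangular unipotent
`(n+1) × (n+1)` matrices over `F_p`.  Then the `n`-th term of the Zassenhaus `p`-filtration
`(Z m)` of `U_{n+1}(F_p)` equals the center, which is isomorphic to `F_p`; moreover
`n = max { h : Z h ≠ 1 }`. -/
theorem zassenhaus_of_unipotent
    (p : ℕ) [Fact p.Prime] (n : ℕ) (hn : 1 ≤ n)
    (Z : ℕ → Subgroup (unipotentUpperTriangular p (n + 1)))
    (hZ1 : Z 1 = ⊤)
    (hZrec : ∀ m : ℕ, 2 ≤ m → Z m = Subgroup.closure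
      ({g | ∃ y ∈ Z ((m + p - 1) / p), g = y ^ p} ∪
        {g | ∃ i j : ℕ, 1 ≤ i ∧ 1 ≤ j ∧ i + j = m ∧
          ∃ a ∈ Z i, ∃ b ∈ Z j, g = ⁅a, b⁆})) :
    Z n = Subgroup.center (unipotentUpperTriangular p (n + 1)) ∧
      Nonempty (Subgroup.center (unipotentUpperTriangular p (n + 1)) ≃*
        Multiplicative (ZMod p)) ∧
      Z n ≠ ⊥ ∧ ∀ h : ℕ, n < h → Z h = ⊥ := by
  have h0L : (0 : Fin (n + 1)) < Fin.last n := by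
    rw [Fin.lt_def]; simp; omega
  have hZle := Z_le_filt Z hZ1 hZrec
  have hcform : ∀ g ∈ Subgroup.center (unipotentUpperTriangular p (n + 1)),
      ∃ c : ZMod p, mat g = 1 + single (0 : Fin (n + 1)) (Fin.last n) c :=
    fun g hg => filt_form hn (central_supp hn hg)
  have hZnC : Z n = Subgroup.center (unipotentUpperTriangular p (n + 1)) := by
    apply le_antisymm
    · exact le_trans (hZle n hn) (filt_le_center hn)
    · intro g hg
      obtain ⟨c, hc⟩ := hcform g hg
      have hge : g = elem 0 (Fin.last n) h0L c := by
        apply UT_ext; rw [mat_elem, hc]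
      rw [hge]
      exact elem_mem_Z Z hZ1 hZrec n hn le_rfl c
  refine ⟨hZnC, ?_, ?_, ?_⟩
  · -- the isomorphism
    have hmem : ∀ c : ZMod p,
        elem (0 : Fin (n + 1)) (Fin.last n) h0L c
          ∈ Subgroup.center (unipotentUpperTriangular p (n + 1)) :=
      fun c => filt_le_center hn (elem_mem_filt hn h0L c)
    refine ⟨⟨⟨fun g => Multiplicative.ofAdd (mat g.1 0 (Fin.last n)),
      fun c => ⟨elem 0 (Fin.last n) h0L (Multiplicative.toAdd c), hmem _⟩, ?_, ?_⟩, ?_⟩⟩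
    · -- left inverse
      intro g
      apply Subtype.ext
      apply UT_ext
      obtain ⟨c, hc⟩ := hcform g.1 g.2
      show mat (elem 0 (Fin.last n) h0L (mat g.1 0 (Fin.last n))) = mat g.1
      have hentry : mat g.1 0 (Fin.last n) = c := by
        rw [hc, one_add_std_apply hn]
      rw [mat_elem, hentry, hc]
    · -- right inverse
      intro c
      show Multiplicative.ofAdd
        (mat (elem 0 (Fin.last n) h0L (Multiplicative.toAdd c)) 0 (Fin.last n)) = c
      rw [mat_elem, one_add_std_apply hn]
      exact ofAdd_toAdd c
    · -- multiplicativity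
      intro x y
      obtain ⟨a, hxa⟩ := hcform x.1 x.2
      obtain ⟨b, hyb⟩ := hcform y.1 y.2
      have hex : mat x.1 0 (Fin.last n) = a := by rw [hxa, one_add_std_apply hn]
      have hey : mat y.1 0 (Fin.last n) = b := by rw [hyb, one_add_std_apply hn]
      have hxy : mat (x.1 * y.1) 0 (Fin.last n) = a + b := by
        rw [mat_mul, hxa, hyb, one_add_std_mul h0L.ne' a b, one_add_std_apply hn]
      show Multiplicative.ofAdd (mat (x.1 * y.1) 0 (Fin.last n))
        = Multiplicative.ofAdd (mat x.1 0 (Fin.last n))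
          * Multiplicative.ofAdd (mat y.1 0 (Fin.last n))
      rw [hxy, hex, hey, ofAdd_add]
  · -- Z n ≠ ⊥
    intro hbot
    have hmem1 := elem_mem_Z Z hZ1 hZrec n hn le_rfl (1 : ZMod p)
    rw [hbot, Subgroup.mem_bot] at hmem1
    have hmem1' : elem (0 : Fin (n + 1)) (Fin.last n) h0L (1 : ZMod p) = 1 := hmem1
    have hmat := congrArg mat hmem1'
    rw [mat_elem, mat_one] at hmat
    have hentry : (1 + single (0 : Fin (n + 1)) (Fin.last n) (1 : ZMod p))
        0 (Fin.last n) = (1 : Matrix (Fin (n + 1)) (Fin (n + 1)) (ZMod p)) 0 (Fin.last n) := by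
      rw [hmat]
    rw [one_add_std_apply hn, Matrix.one_apply_ne h0L.ne] at hentry
    exact one_ne_zero hentry
  · -- vanishing above n
    intro h hh
    have h1 : Z h ≤ filt p (n + 1) h := hZle h (by omega)
    have h2 : filt p (n + 1) h = ⊥ := filt_eq_bot (by omega)
    rw [h2] at h1
    exact le_bot_iff.mp h1
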